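/- For φ ∈ (−π/2, 0], define λ(φ) = (2 cos φ + 2 cos φ sin φ)/8 and λ'(φ) = (−2 sin φ + 2 cos 2φ)/8, and set ṡ(φ) = 2λ(φ)·cos φ − λ'(φ)·sin φ and ν̇(φ) = 2λ(φ)·sin φ + λ'(φ)·cos φ. Then ν̇(φ) > 0 and the identity (8/(27·ν̇(φ)))·(9·ṡ(φ)·ν̇(φ)² + ṡ(φ)³ + (ṡ(φ)² − 3ν̇(φ)²)^{3/2}) = (2 cos φ + 2 cos φ sin φ)/4 holds for every φ ∈ (−π/2, 0]. -/
import Mathlib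

open Real

/-- On `φ ∈ (−π/2, 0]`, with `λ(φ) = (2cos φ + 2cos φ sin φ)/8`,
`λ'(φ) = (−2sin φ + 2cos 2φ)/8`, `ṡ = 2λcos φ − λ'sin φ`,
`ν̇ = 2λsin φ + λ'cos φ`, one has `ν̇ > 0` and
`(8/(27ν̇))(9ṡν̇² + ṡ³ + (ṡ² − 3ν̇²)^{3/2}) = (2cos φ + 2cos φ sin φ)/4`. -/
theorem stmt_9 (φ : ℝ) (hφ : φ ∈ Set.Ioc (-(π/2)) 0) :
    0 < 2 * ((2 * Real.cos φ + 2 * Real.cos φ * Real.sin φ) / 8) * Real.sin φ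
        + ((-2 * Real.sin φ + 2 * Real.cos (2*φ)) / 8) * Real.cos φ ∧
    (8 / (27 * (2 * ((2 * Real.cos φ + 2 * Real.cos φ * Real.sin φ) / 8) * Real.sin φ
        + ((-2 * Real.sin φ + 2 * Real.cos (2*φ)) / 8) * Real.cos φ)))
      * (9 * (2 * ((2 * Real.cos φ + 2 * Real.cos φ * Real.sin φ) / 8) * Real.cos φ
            - ((-2 * Real.sin φ + 2 * Real.cos (2*φ)) / 8) * Real.sin φ)
          * (2 * ((2 * Real.cos φ + 2 * Real.cos φ * Real.sin φ) / 8) * Real.sin φ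
            + ((-2 * Real.sin φ + 2 * Real.cos (2*φ)) / 8) * Real.cos φ)^2
        + (2 * ((2 * Real.cos φ + 2 * Real.cos φ * Real.sin φ) / 8) * Real.cos φ
            - ((-2 * Real.sin φ + 2 * Real.cos (2*φ)) / 8) * Real.sin φ)^3
        + ((2 * ((2 * Real.cos φ + 2 * Real.cos φ * Real.sin φ) / 8) * Real.cos φ
              - ((-2 * Real.sin φ + 2 * Real.cos (2*φ)) / 8) * Real.sin φ)^2
            - 3 * (2 * ((2 * Real.cos φ + 2 * Real.cos φ * Real.sin φ) / 8) * Real.sin φ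
              + ((-2 * Real.sin φ + 2 * Real.cos (2*φ)) / 8) * Real.cos φ)^2)
          ^ ((3:ℝ)/2))
      = (2 * Real.cos φ + 2 * Real.cos φ * Real.sin φ) / 4 := by
  obtain ⟨h1, h2⟩ := hφ
  have hc : 0 < Real.cos φ := Real.cos_pos_of_mem_Ioo ⟨h1, lt_of_le_of_lt h2 (by positivity)⟩
  have hs0 : Real.sin φ ≤ 0 := Real.sin_nonpos_of_nonpos_of_neg_pi_le h2 (by nlinarith [Real.pi_pos])
  have hpyth : Real.sin φ ^ 2 + Real.cos φ ^ 2 = 1 := Real.sin_sq_add_cos_sq φ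
  have hs1 : -1 < Real.sin φ := by nlinarith
  rw [Real.cos_two_mul]
  set s := Real.sin φ
  set c := Real.cos φ
  have h1s : 0 < 1 + s := by linarith
  have hnu : 2 * ((2 * c + 2 * c * s) / 8) * s + ((-2 * s + 2 * (2 * c ^ 2 - 1)) / 8) * c
      = c * (1 + s) / 4 := by linear_combination (c / 2) * hpyth
  have hnupos : 0 < c * (1 + s) / 4 := by positivity
  rw [hnu]
  refine ⟨hnupos, ?_⟩
  have hy0 : (0:ℝ) ≤ (1 + s) * (1 - 2 * s) / 4 := by nlinarith
  have hy : (2 * ((2 * c + 2 * c * s) / 8) * c - ((-2 * s + 2 * (2 * c ^ 2 - 1)) / 8) * s) ^ 2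
      - 3 * (c * (1 + s) / 4) ^ 2 = ((1 + s) * (1 - 2 * s) / 4) ^ 2 := by
    linear_combination (c^2/4 - 3*s^2/16 - s/8 + 1/16) * hpyth
  rw [hy]
  have hy3 : (((1 + s) * (1 - 2 * s) / 4) ^ 2) ^ ((3:ℝ)/2)
      = ((1 + s) * (1 - 2 * s) / 4) ^ 3 := by
    rw [← Real.rpow_natCast ((1 + s) * (1 - 2 * s) / 4) 2,
        ← Real.rpow_natCast ((1 + s) * (1 - 2 * s) / 4) 3, ← Real.rpow_mul hy0]
    norm_num
  rw [hy3]
  have hne : (27:ℝ) * (c * (1 + s) / 4) ≠ 0 := by positivity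
  rw [div_mul_eq_mul_div, div_eq_iff hne]
  linear_combination (13/4*c^2 + 6*s*c^2 + 11/4*s^2*c^2 + s^2/4 - 9/8*s^3 - 7/8*s^4
      + 3/8*s + c^4 - 1/8) * hpyth
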